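/- arXiv:2112.05279 — 3 statements merged into one kernel-verified Lean document; each statement's English description precedes it below -/
import Mathlib

section
/- For positive integers k and j, p_{≤k}(j) = Σ_{m≥0} (−1)^m S_k(m;j), where S_k(m;j) = Σ p(j − Σ_{i=1}^m (k + r_i)), the inner sum ranging over strictly increasing sequences 1 ≤ r_1 < r_2 < ⋯ < r_m of positive integers with r_1 + ⋯ + r_m ≤ j − mk. -/
open Finset

/-- number of partitions of `n` -/
def pcount (n : ℕ) : ℕ := Fintype.card (Nat.Partition n)

/-- partitions of `n` with at most `k` parts -/
def pleParts (k n : ℕ) : ℕ :=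
  (Finset.univ.filter (fun π : Nat.Partition n => π.parts.card ≤ k)).card

/-- partitions of `n` with at most `k` parts divisible by `A` -/
def pleA (A k n : ℕ) : ℕ :=
  (Finset.univ.filter
    (fun π : Nat.Partition n => (π.parts.filter (fun r => A ∣ r)).card ≤ k)).card

/-- partitions of `n` with exactly `k` parts divisible by `A` -/
def pexact (A k n : ℕ) : ℕ :=
  (Finset.univ.filter
    (fun π : Nat.Partition n => (π.parts.filter (fun r => A ∣ r)).card = k)).card

/-- `A`-regular partitions of `n` -/
def preg (A n : ℕ) : ℕ :=
  (Finset.univ.filter (fun π : Nat.Partition n => ∀ r ∈ π.parts, ¬ A ∣ r)).card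

/-- the Erdős–Lehner sums `S_k(m;j)` -/
def Sk (k m j : ℕ) : ℕ :=
  ∑ R ∈ ((Finset.Icc 1 j).powersetCard m).filter (fun R => ∑ r ∈ R, (k + r) ≤ j),
    pcount (j - ∑ r ∈ R, (k + r))


lemma YD.card_transpose (μ : YoungDiagram) : μ.transpose.card = μ.card := by
  apply Finset.card_nbij (fun c => c.swap)
  · intro c hc
    simpa [YoungDiagram.mem_transpose] using hc
  · intro a _ b _ h
    exact Prod.swap_injective h
  · intro c hc
    exact ⟨c.swap, by simpa [YoungDiagram.mem_transpose] using hc, Prod.swap_swap c⟩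

lemma YD.cells_eq (μ : YoungDiagram) :
    μ.cells = (Finset.range (μ.colLen 0)).biUnion μ.row := by
  ext ⟨i, j⟩
  simp only [Finset.mem_biUnion, Finset.mem_range, YoungDiagram.mem_row_iff]
  constructor
  · intro h
    refine ⟨i, ?_, by simpa using h, rfl⟩
    rw [← YoungDiagram.mem_iff_lt_colLen]
    exact μ.up_left_mem le_rfl (Nat.zero_le _) h
  · rintro ⟨a, _, h, rfl⟩
    exact h

lemma YD.card_eq_sum_rowLens (μ : YoungDiagram) : μ.card = μ.rowLens.sum := by
  have h : μ.card = ∑ i ∈ Finset.range (μ.colLen 0), μ.rowLen i := by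
    rw [YoungDiagram.card, YD.cells_eq, Finset.card_biUnion]
    · exact Finset.sum_congr rfl fun i _ => (μ.rowLen_eq_card).symm
    · intro a _ b _ hab
      simp only [Finset.disjoint_left, YoungDiagram.mem_row_iff]
      rintro c ⟨_, rfl⟩ ⟨_, h2⟩
      exact hab h2
  rw [h, YoungDiagram.rowLens]
  rw [← Multiset.sum_coe, ← Multiset.map_coe]
  rfl

/-- The sorted (descending) list of parts. -/
def sortedParts {n : ℕ} (π : Nat.Partition n) : List ℕ := π.parts.sort (· ≥ ·)

lemma sortedParts_sorted {n : ℕ} (π : Nat.Partition n) :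
    (sortedParts π).Pairwise (· ≥ ·) := Multiset.pairwise_sort _ _

lemma coe_sortedParts {n : ℕ} (π : Nat.Partition n) :
    (sortedParts π : Multiset ℕ) = π.parts := Multiset.sort_eq _ _

lemma sortedParts_pos {n : ℕ} (π : Nat.Partition n) :
    ∀ x ∈ sortedParts π, 0 < x := by
  intro x hx
  exact π.parts_pos (by rw [← coe_sortedParts π]; exact_mod_cast hx)

/-- The Young diagram of a partition. -/
def diagram {n : ℕ} (π : Nat.Partition n) : YoungDiagram :=
  YoungDiagram.ofRowLens _ (sortedParts_sorted π).sortedGE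

lemma rowLens_diagram {n : ℕ} (π : Nat.Partition n) :
    (diagram π).rowLens = sortedParts π :=
  YoungDiagram.rowLens_ofRowLens_eq_self (sortedParts_pos π)

lemma card_diagram {n : ℕ} (π : Nat.Partition n) : (diagram π).card = n := by
  rw [YD.card_eq_sum_rowLens, rowLens_diagram]
  rw [← Multiset.sum_coe, coe_sortedParts, π.parts_sum]

/-- The conjugate partition. -/
def conj {n : ℕ} (π : Nat.Partition n) : Nat.Partition n where
  parts := ((diagram π).transpose.rowLens : Multiset ℕ)
  parts_pos := by
    intro i hi
    exact (diagram π).transpose.pos_of_mem_rowLens i (by exact_mod_cast hi)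
  parts_sum := by
    rw [Multiset.sum_coe, ← YD.card_eq_sum_rowLens, YD.card_transpose, card_diagram]

lemma sortedParts_conj {n : ℕ} (π : Nat.Partition n) :
    sortedParts (conj π) = (diagram π).transpose.rowLens := by
  apply List.Perm.eq_of_pairwise' (sortedParts_sorted _) ((diagram π).transpose.rowLens_sorted.pairwise) ?_
  rw [← Multiset.coe_eq_coe, coe_sortedParts]
  rfl

lemma diagram_conj {n : ℕ} (π : Nat.Partition n) :
    diagram (conj π) = (diagram π).transpose := by
  rw [← YoungDiagram.ofRowLens_to_rowLens_eq_self (μ := (diagram π).transpose)]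
  unfold diagram
  congr 1
  exact sortedParts_conj π

lemma conj_conj {n : ℕ} (π : Nat.Partition n) : conj (conj π) = π := by
  ext1
  show ((diagram (conj π)).transpose.rowLens : Multiset ℕ) = π.parts
  rw [diagram_conj, YoungDiagram.transpose_transpose, rowLens_diagram, coe_sortedParts]

lemma card_conj_parts {n : ℕ} (π : Nat.Partition n) :
    (conj π).parts.card = (diagram π).rowLen 0 := by
  show Multiset.card ((diagram π).transpose.rowLens : Multiset ℕ) = _
  rw [Multiset.coe_card, YoungDiagram.length_rowLens, YoungDiagram.colLen_transpose]

lemma rowLen_zero_le_iff {n : ℕ} (π : Nat.Partition n) {k : ℕ} :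
    (diagram π).rowLen 0 ≤ k ↔ ∀ r ∈ π.parts, r ≤ k := by
  have hmem : ∀ r : ℕ, r ∈ π.parts ↔ r ∈ sortedParts π := by
    intro r; rw [← coe_sortedParts π]; exact Iff.rfl
  constructor
  · intro h r hr
    rw [hmem] at hr
    obtain ⟨i, hi, rfl⟩ := List.getElem_of_mem hr
    calc (sortedParts π)[i] = (diagram π).rowLen i := (YoungDiagram.rowLen_ofRowLens ⟨i, hi⟩).symm
    _ ≤ (diagram π).rowLen 0 := (diagram π).rowLen_anti 0 i (Nat.zero_le i)
    _ ≤ k := h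
  · intro h
    by_contra hlt
    push_neg at hlt
    have : (0, k) ∈ diagram π := YoungDiagram.mem_iff_lt_rowLen.2 hlt
    rw [diagram, YoungDiagram.mem_ofRowLens] at this
    obtain ⟨hl, hk⟩ := this
    have := h _ (by rw [hmem]; exact List.getElem_mem hl)
    omega

lemma pleParts_eq_card_max_le (k n : ℕ) :
    (Finset.univ.filter (fun π : Nat.Partition n => π.parts.card ≤ k)).card
      = (Finset.univ.filter (fun π : Nat.Partition n => ∀ r ∈ π.parts, r ≤ k)).card := by
  apply Finset.card_bij' (fun π _ => conj π) (fun π _ => conj π)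
  · intro π hπ
    simp only [Finset.mem_filter, Finset.mem_univ, true_and] at hπ ⊢
    rw [← rowLen_zero_le_iff, ← card_conj_parts, conj_conj]
    exact hπ
  · intro π hπ
    simp only [Finset.mem_filter, Finset.mem_univ, true_and] at hπ ⊢
    rw [card_conj_parts, rowLen_zero_le_iff]
    exact hπ
  · intro π _; exact conj_conj π
  · intro π _; exact conj_conj π

lemma msum_eq {k : ℕ} (R : Finset ℕ) :
    (R.val.map (fun r => k + r)).sum = ∑ r ∈ R, (k + r) :=
  (Finset.sum_eq_multiset_sum R _).symm

lemma count_contains (k j : ℕ) (hk : 1 ≤ k) (R : Finset ℕ) :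
    (Finset.univ.filter
        (fun π : Nat.Partition j => R.val.map (fun r => k + r) ≤ π.parts)).card
      = if ∑ r ∈ R, (k + r) ≤ j then pcount (j - ∑ r ∈ R, (k + r)) else 0 := by
  set M : Multiset ℕ := R.val.map (fun r => k + r) with hM
  set s := ∑ r ∈ R, (k + r) with hs
  have hMsum : M.sum = s := msum_eq R
  have key : ∀ π : Nat.Partition j, M ≤ π.parts → (π.parts - M).sum = j - s := by
    intro π h
    have h1 : (π.parts - M) + M = π.parts := tsub_add_cancel_of_le h
    have h2 : (π.parts - M).sum + s = j := by
      rw [← hMsum, ← Multiset.sum_add, h1, π.parts_sum]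
    omega
  split_ifs with hle
  · rw [pcount, ← Finset.card_univ]
    refine Finset.card_bij'
      (fun π hπ => ⟨π.parts - M, fun {i} hi => π.parts_pos (Multiset.mem_of_le tsub_le_self hi),
        key π (by simpa using hπ)⟩)
      (fun μ _ => ⟨μ.parts + M, ?_, ?_⟩) (fun _ _ => Finset.mem_univ _) ?_ ?_ ?_
    · intro i hi
      rcases Multiset.mem_add.1 hi with h | h
      · exact μ.parts_pos h
      · rw [hM] at h
        obtain ⟨r, _, rfl⟩ := Multiset.mem_map.1 h
        omega
    · rw [Multiset.sum_add, hMsum, μ.parts_sum]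
      omega
    · intro μ _
      simp only [Finset.mem_filter, Finset.mem_univ, true_and]
      exact Multiset.le_add_left M μ.parts
    · intro π hπ
      ext1
      simp only
      exact tsub_add_cancel_of_le (by simpa using hπ)
    · intro μ _
      ext1
      simp only
      exact add_tsub_cancel_right _ _
  · convert Finset.card_empty
    rw [Finset.filter_eq_empty_iff]
    intro π _
    intro h
    have h1 : (π.parts - M) + M = π.parts := tsub_add_cancel_of_le h
    have : (π.parts - M).sum + s = j := by
      rw [← hMsum, ← Multiset.sum_add, h1, π.parts_sum]
    omega

lemma multiset_le_iff (k : ℕ) {n : ℕ} (R : Finset ℕ) (π : Nat.Partition n) :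
    R.val.map (fun r => k + r) ≤ π.parts ↔ ∀ r ∈ R, k + r ∈ π.parts := by
  rw [Multiset.le_iff_subset (R.nodup.map fun a b h => by omega), Multiset.subset_iff]
  constructor
  · intro h r hr
    exact h (Multiset.mem_map.2 ⟨r, hr, rfl⟩)
  · intro h a ha
    obtain ⟨r, hr, rfl⟩ := Multiset.mem_map.1 ha
    exact h r hr

theorem stmt2 (k j : ℕ) (hk : 1 ≤ k) (hj : 1 ≤ j) :
    (pleParts k j : ℤ) = ∑ m ∈ Finset.range (j + 1), (-1 : ℤ) ^ m * Sk k m j := by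
  classical
  have step1 : ∀ m, (Sk k m j : ℤ) = ∑ R ∈ (Finset.Icc 1 j).powersetCard m,
      ((Finset.univ.filter
        (fun π : Nat.Partition j => R.val.map (fun r => k + r) ≤ π.parts)).card : ℤ) := by
    intro m
    rw [Sk]
    push_cast
    rw [Finset.sum_filter]
    apply Finset.sum_congr rfl
    intro R _
    rw [count_contains k j hk R]
    split_ifs <;> simp
  calc (pleParts k j : ℤ)
      = ∑ π ∈ (Finset.univ : Finset (Nat.Partition j)),
          (if (Finset.Icc 1 j).filter (fun r => k + r ∈ π.parts) = ∅ then (1 : ℤ) else 0) := by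
        have hDe : ∀ π : Nat.Partition j,
            ((Finset.Icc 1 j).filter (fun r => k + r ∈ π.parts) = ∅)
              ↔ (∀ r ∈ π.parts, r ≤ k) := by
          intro π
          rw [Finset.filter_eq_empty_iff]
          constructor
          · intro h a ha
            by_contra hcon
            push_neg at hcon
            have haj : a ≤ j := by
              have := Multiset.single_le_sum (fun x (_ : x ∈ π.parts) => Nat.zero_le x) a ha
              rwa [π.parts_sum] at this
            have hak : k + (a - k) = a := by omega
            exact h (x := a - k) (Finset.mem_Icc.2 ⟨by omega, by omega⟩) (by rw [hak]; exact ha)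
          · intro h r hr hmem
            have h1 := h _ hmem
            have h2 := (Finset.mem_Icc.1 hr).1
            omega
        rw [Finset.sum_boole, pleParts]
        norm_cast
        rw [pleParts_eq_card_max_le]
        congr 1
        ext π
        simp only [Finset.mem_filter, Finset.mem_univ, true_and]
        exact (hDe π).symm
    _ = ∑ π ∈ (Finset.univ : Finset (Nat.Partition j)),
          ∑ R ∈ ((Finset.Icc 1 j).filter (fun r => k + r ∈ π.parts)).powerset,
            (-1 : ℤ) ^ R.card := by
        apply Finset.sum_congr rfl
        intro π _
        rw [Finset.sum_powerset_neg_one_pow_card]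
    _ = ∑ π ∈ (Finset.univ : Finset (Nat.Partition j)),
          ∑ R ∈ (Finset.Icc 1 j).powerset,
            (if R.val.map (fun r => k + r) ≤ π.parts then (-1 : ℤ) ^ R.card else 0) := by
        apply Finset.sum_congr rfl
        intro π _
        rw [← Finset.sum_filter]
        congr 1
        ext R
        simp only [Finset.mem_filter, Finset.mem_powerset, multiset_le_iff,
          Finset.subset_iff, Finset.mem_filter]
        constructor
        · intro h
          exact ⟨fun {x} hx => (h hx).1, fun r hr => (h hr).2⟩
        · rintro ⟨h1, h2⟩ x hx
          exact ⟨h1 hx, h2 x hx⟩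
    _ = ∑ R ∈ (Finset.Icc 1 j).powerset, (-1 : ℤ) ^ R.card *
          ((Finset.univ.filter
            (fun π : Nat.Partition j => R.val.map (fun r => k + r) ≤ π.parts)).card : ℤ) := by
        rw [Finset.sum_comm]
        apply Finset.sum_congr rfl
        intro R _
        rw [← Finset.sum_boole, Finset.mul_sum]
        apply Finset.sum_congr rfl
        intro π _
        split_ifs <;> ring
    _ = ∑ m ∈ Finset.range (j + 1), (-1 : ℤ) ^ m * Sk k m j := by
        have hcard : (Finset.Icc 1 j).card = j := by simp
        rw [Finset.sum_powerset, hcard]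
        apply Finset.sum_congr rfl
        intro m _
        rw [step1, Finset.mul_sum]
        apply Finset.sum_congr rfl
        intro R hR
        rw [(Finset.mem_powersetCard.1 hR).2]
end

section
/- For an integer A ≥ 2 and k ≥ 0, the generating function Σ_{n≥0} p_{≤k}(A;n) q^n equals (q^A;q^A)_∞ / ((q;q)_∞ (q^A;q^A)_k), where (a;q)_k = Π_{j=0}^{k−1}(1 − a q^j). -/
open Finset

open PowerSeries

namespace EL


lemma sum_map_pred (t : Multiset ℕ) (ht : ∀ x ∈ t, 0 < x) :
    (t.map (· - 1)).sum + t.card = t.sum := by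
  induction t using Multiset.induction with
  | empty => simp
  | cons a s ih =>
    simp only [Multiset.map_cons, Multiset.sum_cons, Multiset.card_cons]
    have ha : 0 < a := ht a (Multiset.mem_cons_self a s)
    have := ih (fun x hx => ht x (Multiset.mem_cons_of_mem hx))
    omega

lemma sum_filter_ne_zero (t : Multiset ℕ) : (t.filter (· ≠ 0)).sum = t.sum := by
  conv_rhs => rw [← Multiset.filter_add_not (· ≠ 0) t]
  rw [Multiset.sum_add]
  have : (t.filter (fun a => ¬ a ≠ 0)).sum = 0 := by
    apply Multiset.sum_eq_zero
    intro x hx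
    have := Multiset.of_mem_filter hx
    omega
  omega

lemma parts_card_le {n : ℕ} (π : Nat.Partition n) : π.parts.card ≤ n := by
  have h := Multiset.card_nsmul_le_sum (s := π.parts) (fun x hx => π.parts_pos hx)
  simpa [π.parts_sum] using h

lemma shrink_expand (t : Multiset ℕ) (ht : ∀ x ∈ t, 0 < x) :
    (((t.map (· - 1)).filter (· ≠ 0)).map (· + 1)) +
      Multiset.replicate (t.card - ((t.map (· - 1)).filter (· ≠ 0)).card) 1 = t := by
  induction t using Multiset.induction with
  | empty => simp
  | cons a s ih =>
    have ha : 0 < a := ht a (Multiset.mem_cons_self a s)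
    have ih' := ih (fun x hx => ht x (Multiset.mem_cons_of_mem hx))
    have hcard : ((s.map (· - 1)).filter (· ≠ 0)).card ≤ s.card := by
      calc ((s.map (· - 1)).filter (· ≠ 0)).card ≤ (s.map (· - 1)).card :=
            Multiset.card_le_card (Multiset.filter_le _ _)
        _ = s.card := Multiset.card_map _ _
    simp only [Multiset.map_cons, Multiset.card_cons]
    by_cases h1 : a = 1
    · subst h1
      rw [Multiset.filter_cons_of_neg _ (by simp)]
      have : s.card + 1 - ((s.map (· - 1)).filter (· ≠ 0)).card
          = (s.card - ((s.map (· - 1)).filter (· ≠ 0)).card) + 1 := by omega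
      rw [this, Multiset.replicate_succ]
      rw [show ((((s.map (· - 1)).filter (· ≠ 0)).map (· + 1)) +
        (1 ::ₘ Multiset.replicate (s.card - ((s.map (· - 1)).filter (· ≠ 0)).card) 1)) =
        1 ::ₘ ((((s.map (· - 1)).filter (· ≠ 0)).map (· + 1)) +
          Multiset.replicate (s.card - ((s.map (· - 1)).filter (· ≠ 0)).card) 1) by
          rw [Multiset.add_cons]]
      rw [ih']
    · rw [Multiset.filter_cons_of_pos _ (by omega)]
      rw [Multiset.map_cons]
      have : a - 1 + 1 = a := by omega
      rw [this, Multiset.card_cons, Multiset.cons_add]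
      have h2 : s.card + 1 - (((s.map (· - 1)).filter (· ≠ 0)).card + 1)
          = s.card - ((s.map (· - 1)).filter (· ≠ 0)).card := by omega
      rw [h2, ih']

lemma pleParts_zero_right (k : ℕ) : pleParts k 0 = 1 := by
  rw [pleParts]
  rw [Finset.filter_true_of_mem (fun π _ => ?_)]
  · simp [Finset.card_univ]
  · have := parts_card_le π
    omega


lemma pleParts_small {k m : ℕ} (h : m ≤ k) : pleParts (k + 1) m = pleParts k m := by
  unfold pleParts
  congr 1
  apply Finset.filter_congr
  intro π _
  have := parts_card_le π
  exact ⟨fun _ => by omega, fun _ => by omega⟩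

lemma pleParts_zero_left {m : ℕ} (h : 0 < m) : pleParts 0 m = 0 := by
  rw [pleParts, Finset.card_eq_zero, Finset.filter_eq_empty_iff]
  intro π _
  simp only [Nat.le_zero, Multiset.card_eq_zero]
  intro hc
  have := π.parts_sum
  rw [hc] at this
  simp at this
  omega

/-- shrink: remove 1 from each part -/
def shrinkP {m k : ℕ} (π : Nat.Partition m) (hπ : π.parts.card = k + 1) :
    Nat.Partition (m - (k + 1)) where
  parts := (π.parts.map (· - 1)).filter (· ≠ 0)
  parts_pos := fun {x} hx => by
    have := Multiset.of_mem_filter hx; omega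
  parts_sum := by
    rw [sum_filter_ne_zero]
    have := sum_map_pred π.parts (fun x hx => π.parts_pos hx)
    rw [π.parts_sum, hπ] at this
    omega

/-- expand: add 1 to each part and pad with ones -/
def expandP {m k : ℕ} (h : k + 1 ≤ m) (σ : Nat.Partition (m - (k + 1)))
    (hσ : σ.parts.card ≤ k + 1) : Nat.Partition m where
  parts := σ.parts.map (· + 1) + Multiset.replicate (k + 1 - σ.parts.card) 1
  parts_pos := fun {x} hx => by
    rcases Multiset.mem_add.1 hx with hx | hx
    · rcases Multiset.mem_map.1 hx with ⟨y, _, rfl⟩; omega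
    · rw [Multiset.eq_of_mem_replicate hx]; omega
  parts_sum := by
    rw [Multiset.sum_add, Multiset.sum_replicate]
    have h1 : (σ.parts.map (· + 1)).sum = σ.parts.sum + σ.parts.card := by
      induction σ.parts using Multiset.induction with
      | empty => simp
      | cons a s ih => simp [ih]; ring
    rw [h1, σ.parts_sum]
    simp only [smul_eq_mul, mul_one]
    omega

lemma shrinkP_card_le {m k : ℕ} (π : Nat.Partition m) (hπ : π.parts.card = k + 1) :
    (shrinkP π hπ).parts.card ≤ k + 1 := by
  calc ((π.parts.map (· - 1)).filter (· ≠ 0)).card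
      ≤ (π.parts.map (· - 1)).card := Multiset.card_le_card (Multiset.filter_le _ _)
    _ = π.parts.card := Multiset.card_map _ _
    _ = k + 1 := hπ

lemma expandP_shrinkP {m k : ℕ} (h : k + 1 ≤ m) (π : Nat.Partition m)
    (hπ : π.parts.card = k + 1) :
    expandP h (shrinkP π hπ) (shrinkP_card_le π hπ) = π := by
  apply Nat.Partition.ext
  show (((π.parts.map (· - 1)).filter (· ≠ 0)).map (· + 1)) +
      Multiset.replicate (k + 1 - ((π.parts.map (· - 1)).filter (· ≠ 0)).card) 1 = π.parts
  rw [← hπ]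
  exact shrink_expand π.parts (fun x hx => π.parts_pos hx)

lemma shrinkP_expandP {m k : ℕ} (h : k + 1 ≤ m) (σ : Nat.Partition (m - (k + 1)))
    (hσ : σ.parts.card ≤ k + 1) (hc : (expandP h σ hσ).parts.card = k + 1) :
    shrinkP (expandP h σ hσ) hc = σ := by
  apply Nat.Partition.ext
  show (((σ.parts.map (· + 1) + Multiset.replicate (k + 1 - σ.parts.card) 1).map (· - 1)).filter
      (· ≠ 0)) = σ.parts
  rw [Multiset.map_add, Multiset.map_map, Multiset.map_replicate]
  have h1 : σ.parts.map ((· - 1) ∘ (· + 1)) = σ.parts.map id :=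
    Multiset.map_congr rfl (fun x _ => by simp)
  rw [h1, Multiset.map_id]
  have h0 : (1 : ℕ) - 1 = 0 := rfl
  rw [h0, Multiset.filter_add]
  have h2 : (Multiset.replicate (k + 1 - σ.parts.card) 0).filter (· ≠ 0) = 0 := by
    rw [Multiset.filter_eq_nil]
    intro a ha
    rw [Multiset.eq_of_mem_replicate ha]
    simp
  have h3 : σ.parts.filter (· ≠ 0) = σ.parts := by
    rw [Multiset.filter_eq_self]
    intro a ha
    have := σ.parts_pos ha
    omega
  rw [h2, h3, add_zero]

lemma expandP_card {m k : ℕ} (h : k + 1 ≤ m) (σ : Nat.Partition (m - (k + 1)))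
    (hσ : σ.parts.card ≤ k + 1) : (expandP h σ hσ).parts.card = k + 1 := by
  show (σ.parts.map (· + 1) + Multiset.replicate (k + 1 - σ.parts.card) 1).card = k + 1
  rw [Multiset.card_add, Multiset.card_map, Multiset.card_replicate]
  omega

lemma pexact_parts_eq {k m : ℕ} (h : k + 1 ≤ m) :
    (Finset.univ.filter (fun π : Nat.Partition m => π.parts.card = k + 1)).card =
      pleParts (k + 1) (m - (k + 1)) := by
  rw [pleParts]
  refine Finset.card_bij'
    (fun π hπ => shrinkP π (by simpa using hπ))
    (fun σ hσ => expandP h σ (by simpa using hσ)) ?_ ?_ ?_ ?_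
  · intro π hπ
    simp only [Finset.mem_filter, Finset.mem_univ, true_and]
    exact shrinkP_card_le π _
  · intro σ hσ
    simp only [Finset.mem_filter, Finset.mem_univ, true_and]
    exact expandP_card h σ _
  · intro π hπ
    exact expandP_shrinkP h π _
  · intro σ hσ
    exact shrinkP_expandP h σ _ _

lemma pleParts_rec {k m : ℕ} (h : k + 1 ≤ m) :
    pleParts (k + 1) m = pleParts k m + pleParts (k + 1) (m - (k + 1)) := by
  rw [← pexact_parts_eq h, pleParts, pleParts]
  rw [← Finset.card_union_of_disjoint (by
    rw [Finset.disjoint_filter]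
    intro π _ h1 h2
    omega)]
  congr 1
  rw [← Finset.filter_or]
  apply Finset.filter_congr
  intro π _
  exact ⟨fun h' => by omega, fun h' => by omega⟩



variable {A k n m : ℕ}

/-- divisible part sum -/
def dsum (A : ℕ) {n : ℕ} (π : Nat.Partition n) : ℕ := (π.parts.filter (fun r => A ∣ r)).sum

lemma dsum_dvd (π : Nat.Partition n) : A ∣ dsum A π :=
  Multiset.dvd_sum (fun x hx => (Multiset.of_mem_filter hx))

lemma dsum_le (π : Nat.Partition n) : dsum A π ≤ n := by
  have h := Multiset.filter_add_not (fun r => A ∣ r) π.parts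
  have h2 := congrArg Multiset.sum h
  rw [Multiset.sum_add, π.parts_sum] at h2
  unfold dsum
  omega

lemma mul_sum_map_div (t : Multiset ℕ) (ht : ∀ x ∈ t, A ∣ x) :
    A * (t.map (· / A)).sum = t.sum := by
  induction t using Multiset.induction with
  | empty => simp
  | cons a s ih =>
    simp only [Multiset.map_cons, Multiset.sum_cons, Nat.mul_add]
    rw [Nat.mul_div_cancel' (ht a (Multiset.mem_cons_self a s)),
      ih (fun x hx => ht x (Multiset.mem_cons_of_mem hx))]

/-- the partition of `m` made of the `A`-divisible parts, divided by `A` -/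
def splitμ (hA : 0 < A) (π : Nat.Partition n) (hπ : dsum A π = A * m) : Nat.Partition m where
  parts := (π.parts.filter (fun r => A ∣ r)).map (· / A)
  parts_pos := fun {x} hx => by
    rcases Multiset.mem_map.1 hx with ⟨y, hy, rfl⟩
    have h1 := π.parts_pos (Multiset.mem_of_mem_filter hy)
    have h2 : A ∣ y := Multiset.of_mem_filter hy
    exact Nat.div_pos (Nat.le_of_dvd h1 h2) hA
  parts_sum := by
    have key : A * ((π.parts.filter (fun r => A ∣ r)).map (· / A)).sum
        = (π.parts.filter (fun r => A ∣ r)).sum :=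
      mul_sum_map_div _ (fun x hx => Multiset.of_mem_filter hx)
    unfold dsum at hπ
    rw [hπ] at key
    exact Nat.eq_of_mul_eq_mul_left hA key

/-- the partition of `n - A*m` made of the non-divisible parts -/
def splitν (π : Nat.Partition n) (hπ : dsum A π = A * m) : Nat.Partition (n - A * m) where
  parts := π.parts.filter (fun r => ¬ A ∣ r)
  parts_pos := fun {x} hx => π.parts_pos (Multiset.mem_of_mem_filter hx)
  parts_sum := by
    have h := Multiset.filter_add_not (fun r => A ∣ r) π.parts
    have h2 := congrArg Multiset.sum h
    rw [Multiset.sum_add, π.parts_sum] at h2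
    unfold dsum at hπ
    omega

/-- join: multiply by A and recombine -/
def joinP (hA : 0 < A) (hm : A * m ≤ n) (μ : Nat.Partition m) (ν : Nat.Partition (n - A * m)) :
    Nat.Partition n where
  parts := μ.parts.map (A * ·) + ν.parts
  parts_pos := fun {x} hx => by
    rcases Multiset.mem_add.1 hx with hx | hx
    · rcases Multiset.mem_map.1 hx with ⟨y, hy, rfl⟩
      have := μ.parts_pos hy
      positivity
    · exact ν.parts_pos hx
  parts_sum := by
    rw [Multiset.sum_add, ν.parts_sum]
    have : (μ.parts.map (A * ·)).sum = A * μ.parts.sum := by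
      induction μ.parts using Multiset.induction with
      | empty => simp
      | cons a s ih => simp [ih, Nat.mul_add]
    rw [this, μ.parts_sum]
    omega



variable {A k n m : ℕ}

lemma filter_dvd_join (hA : 0 < A) (μ : Nat.Partition m) (t : Multiset ℕ)
    (ht : ∀ r ∈ t, ¬ A ∣ r) :
    (μ.parts.map (A * ·) + t).filter (fun r => A ∣ r) = μ.parts.map (A * ·) := by
  rw [Multiset.filter_add]
  rw [Multiset.filter_eq_self.2 (fun x hx => by
    rcases Multiset.mem_map.1 hx with ⟨y, _, rfl⟩; exact Dvd.intro y rfl)]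
  rw [Multiset.filter_eq_nil.2 ht, add_zero]

lemma filter_not_dvd_join (hA : 0 < A) (μ : Nat.Partition m) (t : Multiset ℕ)
    (ht : ∀ r ∈ t, ¬ A ∣ r) :
    (μ.parts.map (A * ·) + t).filter (fun r => ¬ A ∣ r) = t := by
  rw [Multiset.filter_add]
  rw [Multiset.filter_eq_nil.2 (fun x hx => by
    rcases Multiset.mem_map.1 hx with ⟨y, _, rfl⟩
    simp only [not_not]
    exact Dvd.intro y rfl)]
  rw [Multiset.filter_eq_self.2 ht, zero_add]

lemma fiber_card (hA : 0 < A) (hm : A * m ≤ n) :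
    (Finset.univ.filter (fun π : Nat.Partition n =>
      (π.parts.filter (fun r => A ∣ r)).card ≤ k ∧ dsum A π = A * m)).card
    = pleParts k m * preg A (n - A * m) := by
  rw [pleParts, preg, ← Finset.card_product]
  refine Finset.card_bij'
    (fun π hπ => (splitμ hA π (Finset.mem_filter.1 hπ).2.2,
      splitν π (Finset.mem_filter.1 hπ).2.2))
    (fun p hp => joinP hA hm p.1 p.2) ?_ ?_ ?_ ?_
  · intro π hπ
    simp only [Finset.mem_filter, Finset.mem_univ, true_and] at hπ
    rw [Finset.mem_product]
    constructor
    · simp only [Finset.mem_filter, Finset.mem_univ, true_and]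
      show ((π.parts.filter (fun r => A ∣ r)).map (· / A)).card ≤ k
      rw [Multiset.card_map]
      exact hπ.1
    · simp only [Finset.mem_filter, Finset.mem_univ, true_and]
      intro r hr
      have hr' : r ∈ π.parts.filter (fun r => ¬ A ∣ r) := hr
      exact (Multiset.mem_filter.1 hr').2
  · intro p hp
    rw [Finset.mem_product] at hp
    simp only [Finset.mem_filter, Finset.mem_univ, true_and] at hp ⊢
    have hreg : ∀ r ∈ p.2.parts, ¬ A ∣ r := hp.2
    constructor
    · show ((p.1.parts.map (A * ·) + p.2.parts).filter (fun r => A ∣ r)).card ≤ k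
      rw [filter_dvd_join hA _ _ hreg, Multiset.card_map]
      exact hp.1
    · show ((p.1.parts.map (A * ·) + p.2.parts).filter (fun r => A ∣ r)).sum = A * m
      rw [filter_dvd_join hA _ _ hreg]
      have : (p.1.parts.map (A * ·)).sum = A * p.1.parts.sum := by
        induction p.1.parts using Multiset.induction with
        | empty => simp
        | cons a s ih => simp [ih, Nat.mul_add]
      rw [this, p.1.parts_sum]
  · intro π hπ
    simp only [Finset.mem_filter, Finset.mem_univ, true_and] at hπ
    apply Nat.Partition.ext
    show ((π.parts.filter (fun r => A ∣ r)).map (· / A)).map (A * ·) +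
      π.parts.filter (fun r => ¬ A ∣ r) = π.parts
    rw [Multiset.map_map]
    have : (π.parts.filter (fun r => A ∣ r)).map ((A * ·) ∘ (· / A)) =
        (π.parts.filter (fun r => A ∣ r)).map id :=
      Multiset.map_congr rfl (fun x hx => by
        have : A ∣ x := Multiset.of_mem_filter hx
        simp only [Function.comp_apply, id_eq]
        exact Nat.mul_div_cancel' this)
    rw [this, Multiset.map_id]
    exact Multiset.filter_add_not _ _
  · intro p hp
    rw [Finset.mem_product] at hp
    simp only [Finset.mem_filter, Finset.mem_univ, true_and] at hp
    have hreg : ∀ r ∈ p.2.parts, ¬ A ∣ r := hp.2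
    apply Prod.ext
    · apply Nat.Partition.ext
      show ((p.1.parts.map (A * ·) + p.2.parts).filter (fun r => A ∣ r)).map (· / A) = p.1.parts
      rw [filter_dvd_join hA _ _ hreg, Multiset.map_map]
      have : p.1.parts.map ((· / A) ∘ (A * ·)) = p.1.parts.map id :=
        Multiset.map_congr rfl (fun x _ => by
          simp only [Function.comp_apply, id_eq]
          exact Nat.mul_div_cancel_left x hA)
      rw [this, Multiset.map_id]
    · apply Nat.Partition.ext
      show (p.1.parts.map (A * ·) + p.2.parts).filter (fun r => ¬ A ∣ r) = p.2.parts
      exact filter_not_dvd_join hA _ _ hreg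

lemma pleA_sum (hA : 0 < A) (k n : ℕ) :
    pleA A k n = ∑ m ∈ Finset.range (n / A + 1), pleParts k m * preg A (n - A * m) := by
  rw [pleA]
  rw [Finset.card_eq_sum_card_fiberwise (f := fun π => dsum A π / A)
    (t := Finset.range (n / A + 1)) (fun π _ => by
      simp only [Finset.mem_coe, Finset.mem_range]
      exact Nat.lt_succ_of_le (Nat.div_le_div_right (dsum_le π)))]
  apply Finset.sum_congr rfl
  intro m hm
  rw [Finset.mem_range] at hm
  have hAm : A * m ≤ n := by
    have h1 : m ≤ n / A := by omega
    calc A * m ≤ A * (n / A) := Nat.mul_le_mul_left A h1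
      _ = (n / A) * A := Nat.mul_comm _ _
      _ ≤ n := Nat.div_mul_le_self n A
  rw [← fiber_card hA hAm, Finset.filter_filter]
  congr 1
  apply Finset.filter_congr
  intro π _
  constructor
  · rintro ⟨h1, h2⟩
    refine ⟨h1, ?_⟩
    obtain ⟨c, hc⟩ := dsum_dvd (A := A) π
    rw [hc] at h2 ⊢
    rw [Nat.mul_div_cancel_left c hA] at h2
    rw [h2]
  · rintro ⟨h1, h2⟩
    refine ⟨h1, ?_⟩
    rw [h2, Nat.mul_div_cancel_left m hA]


noncomputable section

/-- congruence of power series modulo `X^(N+1)` -/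
def Cong (N : ℕ) (f g : PowerSeries ℚ) : Prop := ∀ n ≤ N, coeff (R := ℚ) n f = coeff (R := ℚ) n g

lemma Cong.refl {N : ℕ} (f : PowerSeries ℚ) : Cong N f f := fun _ _ => rfl

lemma Cong.of_eq {N : ℕ} {f g : PowerSeries ℚ} (h : f = g) : Cong N f g := fun _ _ => by rw [h]

lemma Cong.trans {N : ℕ} {f g h : PowerSeries ℚ} (h1 : Cong N f g) (h2 : Cong N g h) :
    Cong N f h := fun n hn => (h1 n hn).trans (h2 n hn)

lemma Cong.symm {N : ℕ} {f g : PowerSeries ℚ} (h : Cong N f g) : Cong N g f :=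
  fun n hn => (h n hn).symm

lemma Cong.mul_right {N : ℕ} {f g : PowerSeries ℚ} (h : Cong N f g) (p : PowerSeries ℚ) :
    Cong N (f * p) (g * p) := by
  intro n hn
  rw [coeff_mul, coeff_mul]
  apply Finset.sum_congr rfl
  intro x hx
  rw [HasAntidiagonal.mem_antidiagonal] at hx
  rw [h x.1 (by omega)]

lemma Cong.mul_left {N : ℕ} {f g : PowerSeries ℚ} (h : Cong N f g) (p : PowerSeries ℚ) :
    Cong N (p * f) (p * g) := by
  rw [mul_comm p f, mul_comm p g]
  exact h.mul_right p

lemma Cong.mul_one' {N : ℕ} {f g : PowerSeries ℚ} (hf : Cong N f 1) (hg : Cong N g 1) :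
    Cong N (f * g) 1 := by
  have h1 : Cong N (f * g) (1 * g) := hf.mul_right g
  rw [one_mul] at h1
  exact h1.trans hg

lemma Cong.prod_one {N : ℕ} {ι : Type*} {s : Finset ι} {f : ι → PowerSeries ℚ}
    (h : ∀ i ∈ s, Cong N (f i) 1) : Cong N (∏ i ∈ s, f i) 1 := by
  classical
  induction s using Finset.induction with
  | empty => simp only [Finset.prod_empty]; exact Cong.refl 1
  | insert _ _ hx ih =>
    rw [Finset.prod_insert hx]
    exact Cong.mul_one' (h _ (Finset.mem_insert_self _ _))
      (ih (fun i hi => h i (Finset.mem_insert_of_mem hi)))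

lemma cong_one_sub_pow {N d : ℕ} (hd : N < d) : Cong N (1 - X^d : PowerSeries ℚ) 1 := by
  intro n hn
  rw [map_sub, coeff_X_pow, if_neg (by omega), sub_zero]

variable (A k N : ℕ)

/-- generating function (truncated) of partitions into at most `k` parts, in `X^A` -/
def Gs : PowerSeries ℚ := ∑ m ∈ range (N + 1), C (R := ℚ) (pleParts k m : ℚ) * X ^ (A * m)

/-- truncated generating function of `A`-regular partitions -/
def Hs : PowerSeries ℚ := ∑ l ∈ range (N + 1), C (R := ℚ) (preg A l : ℚ) * X ^ l

lemma coeff_sum_id (a : ℕ → ℚ) {n : ℕ} (hn : n ≤ N) :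
    coeff (R := ℚ) n (∑ l ∈ range (N + 1), C (R := ℚ) (a l) * X ^ l) = a n := by
  rw [map_sum]
  rw [Finset.sum_eq_single n]
  · rw [coeff_C_mul, coeff_X_pow, if_pos rfl, mul_one]
  · intro b _ hb
    rw [coeff_C_mul, coeff_X_pow, if_neg (fun h => hb h.symm), mul_zero]
  · intro h
    exact absurd (Finset.mem_range.2 (by omega)) h

lemma coeff_Hs {n : ℕ} (hn : n ≤ N) : coeff (R := ℚ) n (Hs A N) = preg A n := coeff_sum_id N _ hn

lemma coeff_Gs (hA : 0 < A) {n : ℕ} (hn : n ≤ N) :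
    coeff (R := ℚ) n (Gs A k N) = if A ∣ n then (pleParts k (n / A) : ℚ) else 0 := by
  rw [Gs, map_sum]
  by_cases h : A ∣ n
  · obtain ⟨m, rfl⟩ := h
    rw [if_pos ⟨m, rfl⟩, Nat.mul_div_cancel_left m hA]
    rw [Finset.sum_eq_single m]
    · rw [coeff_C_mul, coeff_X_pow, if_pos rfl, mul_one]
    · intro b _ hb
      rw [coeff_C_mul, coeff_X_pow, if_neg (fun h => hb (by
        exact Nat.eq_of_mul_eq_mul_left hA h.symm)), mul_zero]
    · intro hm
      exact absurd (Finset.mem_range.2 (by nlinarith [Nat.le_mul_of_pos_left m hA])) hm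
  · rw [if_neg h]
    apply Finset.sum_eq_zero
    intro m _
    rw [coeff_C_mul, coeff_X_pow, if_neg (fun hh => h (by rw [hh]; exact ⟨m, rfl⟩)), mul_zero]

lemma Gs_zero : Gs A 0 N = 1 := by
  rw [Gs, Finset.sum_eq_single 0]
  · rw [pleParts_zero_right]; simp
  · intro b _ hb
    rw [pleParts_zero_left (Nat.pos_of_ne_zero hb)]
    simp
  · intro h
    exact absurd (Finset.mem_range.2 (by omega)) h

lemma Gs_step (hA : 0 < A) :
    Cong N (Gs A (k + 1) N * (1 - X ^ (A * (k + 1)))) (Gs A k N) := by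
  intro n hn
  have e1 : coeff (R := ℚ) n (Gs A (k + 1) N * (1 - X ^ (A * (k + 1)))) =
      coeff (R := ℚ) n (Gs A (k + 1) N) -
        (if A * (k + 1) ≤ n then coeff (R := ℚ) (n - A * (k + 1)) (Gs A (k + 1) N) else 0) := by
    rw [mul_sub, mul_one, map_sub, coeff_mul_X_pow']
  rw [e1, coeff_Gs A (k + 1) N hA hn, coeff_Gs A k N hA hn]
  by_cases h : A ∣ n
  · obtain ⟨m, rfl⟩ := h
    simp only [dvd_mul_right, if_true]
    rw [Nat.mul_div_cancel_left m hA]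
    by_cases hle : A * (k + 1) ≤ A * m
    · have hm : k + 1 ≤ m := Nat.le_of_mul_le_mul_left hle hA
      rw [if_pos hle]
      have hsub : A * m - A * (k + 1) = A * (m - (k + 1)) := by
        have h1 : m = (m - (k + 1)) + (k + 1) := by omega
        conv_lhs => rw [h1]
        rw [Nat.mul_add]
        omega
      rw [hsub, coeff_Gs A (k + 1) N hA (by omega)]
      simp only [dvd_mul_right, if_true]
      rw [Nat.mul_div_cancel_left _ hA]
      rw [pleParts_rec hm]
      push_cast
      ring
    · rw [if_neg hle, sub_zero]
      have hm : m ≤ k := by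
        by_contra hc
        exact hle (Nat.mul_le_mul_left A (by omega))
      rw [pleParts_small hm]
  · rw [if_neg h, if_neg h]
    by_cases hle : A * (k + 1) ≤ n
    · rw [if_pos hle]
      have h2 : ¬ A ∣ (n - A * (k + 1)) := by
        intro ⟨c, hc⟩
        exact h ⟨c + (k + 1), by rw [Nat.mul_add]; omega⟩
      rw [coeff_Gs A (k + 1) N hA (by omega), if_neg h2, sub_zero]
    · rw [if_neg hle, sub_zero]

lemma Gs_prod (hA : 0 < A) :
    ∀ k, Cong N (Gs A k N * ∏ j ∈ Icc 1 k, (1 - X ^ (A * j))) 1 := by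
  intro k
  induction k with
  | zero => simp [Gs_zero]; exact Cong.refl 1
  | succ k ih =>
    rw [Finset.prod_Icc_succ_top (show 1 ≤ k + 1 by omega)]
    have heq : Gs A (k + 1) N * ((∏ j ∈ Icc 1 k, (1 - X ^ (A * j))) * (1 - X ^ (A * (k + 1))))
        = (Gs A (k + 1) N * (1 - X ^ (A * (k + 1)))) * ∏ j ∈ Icc 1 k, (1 - X ^ (A * j)) := by
      ring
    refine (Cong.of_eq heq).trans (((Gs_step A k N hA).mul_right _).trans ih)

section Archive
open scoped Classical

/-- indicator power series -/
def indicatorSeries (α : Type*) [Semiring α] (s : Set ℕ) : PowerSeries α :=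
  PowerSeries.mk fun n => if n ∈ s then 1 else 0

theorem coeff_indicator {α : Type*} (s : Set ℕ) [Semiring α] (n : ℕ) :
    coeff (R := α) n (indicatorSeries _ s) = if n ∈ s then 1 else 0 :=
  coeff_mk _ _

variable {α : Type*}

theorem coeff_indicator_pos (s : Set ℕ) [Semiring α] (n : ℕ) (h : n ∈ s) :
    coeff (R := α) n (indicatorSeries _ s) = 1 := by rw [coeff_indicator, if_pos h]

theorem coeff_indicator_neg (s : Set ℕ) [Semiring α] (n : ℕ) (h : n ∉ s) :
    coeff (R := α) n (indicatorSeries _ s) = 0 := by rw [coeff_indicator, if_neg h]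

theorem constantCoeff_indicator (s : Set ℕ) [Semiring α] :
    constantCoeff (R := α) (indicatorSeries _ s) = if 0 ∈ s then 1 else 0 :=
  rfl


theorem num_series' [Field α] (i : ℕ) :
    (1 - (X : PowerSeries α) ^ (i + 1))⁻¹ = indicatorSeries α {k | i + 1 ∣ k} := by
  rw [PowerSeries.inv_eq_iff_mul_eq_one]
  · ext n
    cases n with
    | zero => simp [mul_sub, zero_pow, constantCoeff_indicator]
    | succ n =>
      simp only [coeff_one, if_false, mul_sub, mul_one, coeff_indicator,
        LinearMap.map_sub, reduceCtorEq]
      simp_rw [coeff_mul, coeff_X_pow, coeff_indicator, @boole_mul _ _ _ _, Set.mem_setOf_eq]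
      erw [sum_ite, sum_ite]
      simp_rw [@filter_filter _ _ _ _ _, sum_const_zero, add_zero, sum_const, nsmul_eq_mul, mul_one,
        sub_eq_iff_eq_add, zero_add]
      symm
      split_ifs with h
      · suffices #{a ∈ antidiagonal (n + 1) | i + 1 ∣ a.fst ∧ a.snd = i + 1} = 1 by
          convert congr_arg ((↑) : ℕ → α) this; norm_cast
        rw [card_eq_one]
        cases' h with p hp
        refine ⟨((i + 1) * (p - 1), i + 1), ?_⟩
        ext ⟨a₁, a₂⟩
        simp only [mem_filter, Prod.mk.injEq, HasAntidiagonal.mem_antidiagonal, mem_singleton]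
        constructor
        · rintro ⟨a_left, ⟨a, rfl⟩, rfl⟩
          refine ⟨?_, rfl⟩
          rw [Nat.mul_sub_left_distrib, ← hp, ← a_left, mul_one, Nat.add_sub_cancel]
        · rintro ⟨rfl, rfl⟩
          match p with
          | 0 => rw [mul_zero] at hp; cases hp
          | p + 1 => rw [hp]; simp [mul_add]
      · suffices #{a ∈ antidiagonal (n + 1) | i + 1 ∣ a.fst ∧ a.snd = i + 1} = 0 by
          convert congr_arg ((↑) : ℕ → α) this; norm_cast
        rw [card_eq_zero]
        apply eq_empty_of_forall_notMem
        simp only [Prod.forall, mem_filter, not_and, HasAntidiagonal.mem_antidiagonal]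
        rintro _ h₁ h₂ ⟨a, rfl⟩ rfl
        apply h
        simp [← h₂]
  · simp [zero_pow]



-- The main workhorse of the partition theorem proof.
theorem partialGF_prop (α : Type*) [CommSemiring α] (n : ℕ) (s : Finset ℕ) (hs : ∀ i ∈ s, 0 < i)
    (c : ℕ → Set ℕ) (hc : ∀ i, i ∉ s → 0 ∈ c i) :
    #{p : n.Partition | (∀ j, p.parts.count j ∈ c j) ∧ ∀ j ∈ p.parts, j ∈ s} =
      coeff (R := α) n (∏ i ∈ s, indicatorSeries α ((· * i) '' c i)) := by
  simp_rw [coeff_prod, coeff_indicator, prod_boole, sum_boole]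
  apply congr_arg
  simp only [mem_univ, forall_true_left, not_and, not_forall, exists_prop,
    Set.mem_image, not_exists]
  set φ : (a : Nat.Partition n) →
    a ∈ filter (fun p ↦ (∀ (j : ℕ), Multiset.count j p.parts ∈ c j) ∧ ∀ j ∈ p.parts, j ∈ s) univ →
    ℕ →₀ ℕ := fun p _ => {
      toFun := fun i => Multiset.count i p.parts • i
      support := Finset.filter (fun i => i ≠ 0) p.parts.toFinset
      mem_support_toFun := fun a => by
        simp only [smul_eq_mul, ne_eq, mul_eq_zero, Multiset.count_eq_zero]
        rw [not_or, not_not]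
        simp only [Multiset.mem_toFinset, not_not, mem_filter] }
  refine Finset.card_bij φ ?_ ?_ ?_
  · intro a ha
    simp only [φ, not_forall, not_exists, not_and, exists_prop, mem_filter]
    rw [mem_finsuppAntidiag]
    dsimp only [ne_eq, smul_eq_mul, id_eq, eq_mpr_eq_cast, le_eq_subset, Finsupp.coe_mk]
    simp only [mem_univ, forall_true_left, not_and, not_forall, exists_prop,
      mem_filter, true_and] at ha
    refine ⟨⟨?_, fun i ↦ ?_⟩, fun i _ ↦ ⟨a.parts.count i, ha.1 i, rfl⟩⟩
    · conv_rhs => simp [← a.parts_sum]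
      rw [sum_multiset_count_of_subset _ s]
      · simp only [smul_eq_mul]
      · intro i
        simp only [Multiset.mem_toFinset, not_not, mem_filter]
        apply ha.2
    · simp only [ne_eq, Multiset.mem_toFinset, not_not, mem_filter, and_imp]
      exact fun hi _ ↦ ha.2 i hi
  · intro p₁ hp₁ p₂ hp₂ h
    apply Nat.Partition.ext
    simp only [true_and, mem_univ, mem_filter] at hp₁ hp₂
    ext i
    simp only [φ, ne_eq, Multiset.mem_toFinset, not_not, smul_eq_mul, Finsupp.mk.injEq] at h
    by_cases hi : i = 0
    · rw [hi]
      rw [Multiset.count_eq_zero_of_notMem]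
      · rw [Multiset.count_eq_zero_of_notMem]
        intro a; exact Nat.lt_irrefl 0 (hs 0 (hp₂.2 0 a))
      intro a; exact Nat.lt_irrefl 0 (hs 0 (hp₁.2 0 a))
    · rw [← mul_left_inj' hi]
      rw [funext_iff] at h
      exact h.2 i
  · simp only [φ, mem_filter, mem_finsuppAntidiag, mem_univ, exists_prop, true_and, and_assoc]
    rintro f ⟨hf, hf₃, hf₄⟩
    have hf' : f ∈ finsuppAntidiag s n := mem_finsuppAntidiag.mpr ⟨hf, hf₃⟩
    simp only [mem_finsuppAntidiag] at hf'
    refine ⟨⟨∑ i ∈ s, Multiset.replicate (f i / i) i, ?_, ?_⟩, ?_, ?_, ?_⟩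
    · intro i hi
      simp only [exists_prop, Multiset.mem_sum, mem_map, Function.Embedding.coeFn_mk] at hi
      rcases hi with ⟨t, ht, z⟩
      apply hs
      rwa [Multiset.eq_of_mem_replicate z]
    · simp_rw [Multiset.sum_sum, Multiset.sum_replicate, Nat.nsmul_eq_mul]
      rw [← hf'.1]
      refine sum_congr rfl fun i hi => Nat.div_mul_cancel ?_
      rcases hf₄ i hi with ⟨w, _, hw₂⟩
      rw [← hw₂]
      exact dvd_mul_left _ _
    · intro i
      simp_rw [Multiset.count_sum', Multiset.count_replicate, sum_ite_eq']
      split_ifs with h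
      · rcases hf₄ i h with ⟨w, hw₁, hw₂⟩
        rwa [← hw₂, Nat.mul_div_cancel _ (hs i h)]
      · exact hc _ h
    · intro i hi
      rw [Multiset.mem_sum] at hi
      rcases hi with ⟨j, hj₁, hj₂⟩
      rwa [Multiset.eq_of_mem_replicate hj₂]
    · ext i
      simp_rw [Multiset.count_sum', Multiset.count_replicate, sum_ite_eq']
      simp only [ne_eq, Multiset.mem_toFinset, not_not, smul_eq_mul, ite_mul,
        zero_mul, Finsupp.coe_mk]
      split_ifs with h
      · apply Nat.div_mul_cancel
        rcases hf₄ i h with ⟨w, _, hw₂⟩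
        apply Dvd.intro_left _ hw₂
      · apply symm
        rw [← Finsupp.notMem_support_iff]
        exact notMem_mono hf'.2 h



end Archive

lemma num_series'' (i : ℕ) (hi : 0 < i) :
    indicatorSeries ℚ {k | i ∣ k} * (1 - X ^ i) = 1 := by
  obtain ⟨j, rfl⟩ : ∃ j, i = j + 1 := ⟨i - 1, by omega⟩
  rw [← num_series' j]
  exact PowerSeries.inv_mul_cancel _ (by simp [zero_pow])

/-- the factors of the regular-partition generating function -/
noncomputable def Ds (A : ℕ) (i : ℕ) : PowerSeries ℚ :=
  if A ∣ i then 1 else indicatorSeries ℚ {k | i ∣ k}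

lemma preg_coeff {A : ℕ} (hA : 2 ≤ A) {n N : ℕ} (hn : n ≤ N) :
    (preg A n : ℚ) = coeff (R := ℚ) n (∏ i ∈ Icc 1 N, Ds A i) := by
  classical
  have hprop := partialGF_prop ℚ n (Icc 1 N) (fun i hi => (Finset.mem_Icc.1 hi).1)
    (fun i => if A ∣ i then ({0} : Set ℕ) else Set.univ)
    (fun i _ => by split <;> simp)
  have hprod : (∏ i ∈ Icc 1 N, indicatorSeries ℚ
        ((· * i) '' (if A ∣ i then ({0} : Set ℕ) else Set.univ))) = ∏ i ∈ Icc 1 N, Ds A i := by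
    apply Finset.prod_congr rfl
    intro i hi
    rw [Ds]
    by_cases hdvd : A ∣ i
    · rw [if_pos hdvd, if_pos hdvd]
      have h0 : ((· * i) '' ({0} : Set ℕ)) = {0} := by
        ext x; simp
      rw [h0]
      ext m
      simp [coeff_indicator, PowerSeries.coeff_one]
    · rw [if_neg hdvd, if_neg hdvd]
      have him : ((· * i) '' (Set.univ : Set ℕ)) = {k | i ∣ k} := by
        ext x
        simp only [Set.image_univ, Set.mem_range, Set.mem_setOf_eq]
        constructor
        · rintro ⟨j, rfl⟩; exact Dvd.intro_left j rfl
        · rintro ⟨j, rfl⟩; exact ⟨j, mul_comm j i⟩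
      rw [him]
  rw [hprod] at hprop
  rw [← hprop, preg]
  norm_cast
  apply congrArg Finset.card
  ext π
  simp only [Finset.mem_filter, Finset.mem_univ, true_and]
  constructor
  · intro hreg
    refine ⟨fun j => ?_, fun j hj => ?_⟩
    · by_cases hdvd : A ∣ j
      · rw [if_pos hdvd]
        simp only [Set.mem_singleton_iff, Multiset.count_eq_zero]
        intro hjp
        exact hreg j hjp hdvd
      · rw [if_neg hdvd]; trivial
    · rw [Finset.mem_Icc]
      refine ⟨π.parts_pos hj, ?_⟩
      calc j ≤ π.parts.sum := Multiset.le_sum_of_mem hj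
        _ = n := π.parts_sum
        _ ≤ N := hn
  · rintro ⟨h1, _⟩ r hr hdvd
    have h2 := h1 r
    rw [if_pos hdvd] at h2
    simp only [Set.mem_singleton_iff, Multiset.count_eq_zero] at h2
    exact h2 hr

lemma Hs_cong {A N : ℕ} (hA : 2 ≤ A) : Cong N (Hs A N) (∏ i ∈ Icc 1 N, Ds A i) :=
  fun n hn => by rw [coeff_Hs A N hn, ← preg_coeff hA hn]

lemma HsP_cong {A N : ℕ} (hA : 2 ≤ A) :
    Cong N (Hs A N * ∏ i ∈ Icc 1 N, (1 - X ^ i))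
      (∏ j ∈ Icc 1 (N / A), (1 - X ^ (A * j))) := by
  have hA0 : 0 < A := by omega
  refine ((Hs_cong hA).mul_right _).trans (Cong.of_eq ?_)
  rw [← Finset.prod_mul_distrib]
  have step2 : ∏ i ∈ Icc 1 N, (Ds A i * (1 - X ^ i))
      = ∏ i ∈ Icc 1 N, (if A ∣ i then (1 - X ^ i : PowerSeries ℚ) else 1) := by
    apply Finset.prod_congr rfl
    intro i hi
    rw [Finset.mem_Icc] at hi
    rw [Ds]
    by_cases hdvd : A ∣ i
    · rw [if_pos hdvd, if_pos hdvd, one_mul]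
    · rw [if_neg hdvd, if_neg hdvd, num_series'' i (by omega)]
  rw [step2, ← Finset.prod_filter]
  refine (Finset.prod_nbij' (fun j => A * j) (fun i => i / A) ?_ ?_ ?_ ?_ ?_).symm
  · intro j hj
    rw [Finset.mem_Icc] at hj
    rw [Finset.mem_filter, Finset.mem_Icc]
    refine ⟨⟨by nlinarith, ?_⟩, dvd_mul_right A j⟩
    calc A * j ≤ A * (N / A) := Nat.mul_le_mul_left A hj.2
      _ = (N / A) * A := Nat.mul_comm _ _
      _ ≤ N := Nat.div_mul_le_self N A
  · intro i hi
    rw [Finset.mem_filter, Finset.mem_Icc] at hi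
    rw [Finset.mem_Icc]
    obtain ⟨⟨h1, h2⟩, hdvd⟩ := hi
    constructor
    · rw [Nat.one_le_div_iff hA0]
      exact Nat.le_of_dvd (by omega) hdvd
    · exact Nat.div_le_div_right h2
  · intro j _
    exact Nat.mul_div_cancel_left j hA0
  · intro i hi
    rw [Finset.mem_filter] at hi
    exact Nat.mul_div_cancel' hi.2
  · intro j _
    rfl

lemma R_cong {A N : ℕ} (hA : 2 ≤ A) :
    Cong N (∏ j ∈ Icc 1 (N / A), (1 - X ^ (A * j)))
      (∏ i ∈ Icc 1 N, (1 - X ^ (A * i))) := by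
  have hA0 : 0 < A := by omega
  have hsplit : (∏ i ∈ Icc 1 N, (1 - X ^ (A * i) : PowerSeries ℚ))
      = (∏ j ∈ Icc 1 (N / A), (1 - X ^ (A * j))) * ∏ i ∈ Ioc (N / A) N, (1 - X ^ (A * i)) := by
    rw [show Icc 1 N = Ioc 0 N from Finset.Icc_add_one_left_eq_Ioc 0 _,
      show Icc 1 (N / A) = Ioc 0 (N / A) from Finset.Icc_add_one_left_eq_Ioc 0 _,
      ← Finset.prod_Ioc_consecutive _ (Nat.zero_le (N / A)) (Nat.div_le_self N A)]
  have hextra : Cong N (∏ i ∈ Ioc (N / A) N, (1 - X ^ (A * i) : PowerSeries ℚ)) 1 := by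
    apply Cong.prod_one
    intro i hi
    rw [Finset.mem_Ioc] at hi
    apply cong_one_sub_pow
    have := (Nat.div_lt_iff_lt_mul hA0).1 hi.1
    calc N < i * A := this
      _ = A * i := Nat.mul_comm _ _
  refine Cong.trans ?_ (Cong.of_eq hsplit.symm)
  refine Cong.trans (Cong.of_eq (mul_one _).symm) ?_
  exact (hextra.symm).mul_left _

lemma F_cong {A : ℕ} (hA : 2 ≤ A) (k N : ℕ) :
    Cong N (∑ n ∈ range (N + 1), C (R := ℚ) (pleA A k n : ℚ) * X ^ n) (Gs A k N * Hs A N) := by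
  have hA0 : 0 < A := by omega
  intro n hn
  rw [coeff_sum_id N _ hn, coeff_mul]
  have hterm : ∀ p ∈ antidiagonal n,
      coeff (R := ℚ) p.1 (Gs A k N) * coeff (R := ℚ) p.2 (Hs A N)
      = if A ∣ p.1 then (pleParts k (p.1 / A) : ℚ) * (preg A p.2 : ℚ) else 0 := by
    intro p hp
    rw [HasAntidiagonal.mem_antidiagonal] at hp
    rw [coeff_Gs A k N hA0 (by omega), coeff_Hs A N (by omega), ite_mul, zero_mul]
  rw [Finset.sum_congr rfl hterm, ← Finset.sum_filter]
  rw [pleA_sum hA0 k n]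
  push_cast
  refine Finset.sum_nbij' (fun m => ((A * m, n - A * m) : ℕ × ℕ)) (fun p => p.1 / A)
    ?_ ?_ ?_ ?_ ?_
  · intro m hm
    rw [Finset.mem_range] at hm
    have hAm : A * m ≤ n := by
      calc A * m ≤ A * (n / A) := Nat.mul_le_mul_left A (by omega)
        _ = (n / A) * A := Nat.mul_comm _ _
        _ ≤ n := Nat.div_mul_le_self n A
    simp only [Finset.mem_filter, HasAntidiagonal.mem_antidiagonal]
    exact ⟨by omega, dvd_mul_right A m⟩
  · intro p hp
    simp only [Finset.mem_filter, HasAntidiagonal.mem_antidiagonal] at hp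
    rw [Finset.mem_range]
    have : p.1 ≤ n := by omega
    exact Nat.lt_succ_of_le (Nat.div_le_div_right this)
  · intro m _
    dsimp only
    exact Nat.mul_div_cancel_left m hA0
  · intro p hp
    simp only [Finset.mem_filter, HasAntidiagonal.mem_antidiagonal] at hp
    have h1 : A * (p.1 / A) = p.1 := Nat.mul_div_cancel' hp.2
    ext
    · exact h1
    · simp only
      omega
  · intro m _
    dsimp only
    rw [Nat.mul_div_cancel_left m hA0]

theorem main_q (A k : ℕ) (hA : 2 ≤ A) (N : ℕ) :
    (coeff (R := ℚ) N)
      ((∑ n ∈ Finset.range (N + 1), C (R := ℚ) (pleA A k n : ℚ) * X ^ n) *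
        (∏ i ∈ Finset.Icc 1 N, (1 - X ^ i)) *
        (∏ j ∈ Finset.Icc 1 k, (1 - X ^ (A * j)))) =
    (coeff (R := ℚ) N) (∏ i ∈ Finset.Icc 1 N, (1 - X ^ (A * i))) := by
  have hA0 : 0 < A := by omega
  set F := ∑ n ∈ Finset.range (N + 1), C (R := ℚ) (pleA A k n : ℚ) * X ^ n with hF
  set P := ∏ i ∈ Finset.Icc 1 N, (1 - (X : PowerSeries ℚ) ^ i) with hP
  set Q := ∏ j ∈ Finset.Icc 1 k, (1 - (X : PowerSeries ℚ) ^ (A * j)) with hQ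
  have c1 : Cong N (F * P * Q) (Gs A k N * Hs A N * P * Q) :=
    ((F_cong hA k N).mul_right P).mul_right Q
  have c2 : Gs A k N * Hs A N * P * Q = (Gs A k N * Q) * (Hs A N * P) := by ring
  have c3 : Cong N ((Gs A k N * Q) * (Hs A N * P)) (Hs A N * P) := by
    have := (Gs_prod A N hA0 k).mul_right (Hs A N * P)
    rw [one_mul] at this
    exact this
  have c4 : Cong N (Hs A N * P) (∏ i ∈ Finset.Icc 1 N, (1 - X ^ (A * i))) :=
    (HsP_cong hA).trans (R_cong hA)
  exact ((c1.trans (Cong.of_eq c2)).trans (c3.trans c4)) N le_rfl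

end
end EL


theorem stmt5 (A k : ℕ) (hA : 2 ≤ A) (N : ℕ) :
    (PowerSeries.coeff (R := ℤ) N)
      ((∑ n ∈ Finset.range (N + 1), PowerSeries.C (R := ℤ) (pleA A k n : ℤ) * PowerSeries.X ^ n) *
        (∏ i ∈ Finset.Icc 1 N, (1 - PowerSeries.X ^ i)) *
        (∏ j ∈ Finset.Icc 1 k, (1 - PowerSeries.X ^ (A * j)))) =
    (PowerSeries.coeff (R := ℤ) N) (∏ i ∈ Finset.Icc 1 N, (1 - PowerSeries.X ^ (A * i))) := by
  have h := EL.main_q A k hA N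
  set f := Int.castRingHom ℚ with hf
  have e1 : PowerSeries.map f
      ((∑ n ∈ Finset.range (N + 1), PowerSeries.C (R := ℤ) (pleA A k n : ℤ) * PowerSeries.X ^ n) *
        (∏ i ∈ Finset.Icc 1 N, (1 - PowerSeries.X ^ i)) *
        (∏ j ∈ Finset.Icc 1 k, (1 - PowerSeries.X ^ (A * j)))) =
      ((∑ n ∈ Finset.range (N + 1), PowerSeries.C (R := ℚ) (pleA A k n : ℚ) * PowerSeries.X ^ n) *
        (∏ i ∈ Finset.Icc 1 N, (1 - PowerSeries.X ^ i)) *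
        (∏ j ∈ Finset.Icc 1 k, (1 - PowerSeries.X ^ (A * j)))) := by
    simp only [map_mul, map_sum, map_prod, map_sub, map_pow, map_one,
      PowerSeries.map_X, PowerSeries.map_C, map_natCast]
  have e2 : PowerSeries.map f (∏ i ∈ Finset.Icc 1 N, (1 - (PowerSeries.X : PowerSeries ℤ) ^ (A * i))) =
      ∏ i ∈ Finset.Icc 1 N, (1 - (PowerSeries.X : PowerSeries ℚ) ^ (A * i)) := by
    simp only [map_prod, map_sub, map_pow, map_one, PowerSeries.map_X]
  have key : (((PowerSeries.coeff (R := ℤ) N)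
      ((∑ n ∈ Finset.range (N + 1), PowerSeries.C (R := ℤ) (pleA A k n : ℤ) * PowerSeries.X ^ n) *
        (∏ i ∈ Finset.Icc 1 N, (1 - PowerSeries.X ^ i)) *
        (∏ j ∈ Finset.Icc 1 k, (1 - PowerSeries.X ^ (A * j)))) : ℤ) : ℚ) =
      (((PowerSeries.coeff (R := ℤ) N) (∏ i ∈ Finset.Icc 1 N,
        (1 - (PowerSeries.X : PowerSeries ℤ) ^ (A * i))) : ℤ) : ℚ) := by
    rw [show ∀ z : ℤ, (z : ℚ) = f z from fun z => rfl, show ∀ z : ℤ, (z : ℚ) = f z from fun z => rfl]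
    rw [← PowerSeries.coeff_map, ← PowerSeries.coeff_map, e1, e2]
    exact h
  exact_mod_cast key
end

section
/- Given the Buryak–Feigin generating function, the coefficient of T^{2k} in the Poincaré polynomial P(X^{[n]}_{α,β};T) equals p_k(α+β; n), the number of partitions of n with exactly k parts divisible by α+β; in particular all odd-index Betti numbers vanish. -/
open Finset

open PowerSeries

noncomputable section
namespace BFaux
variable {R : Type*} [CommRing R]

def wgeom (w : R) (i : ℕ) : PowerSeries R :=
  PowerSeries.mk fun t => if i ∣ t then w ^ (t / i) else 0

theorem wgeom_mul (w : R) (i : ℕ) (hi : 0 < i) :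
    (1 - PowerSeries.C (R := R) w * X ^ i) * wgeom w i = 1 := by
  have : (1 - PowerSeries.C (R := R) w * X ^ i) * wgeom w i
      = wgeom w i - (wgeom w i * PowerSeries.C (R := R) w) * X ^ i := by ring
  rw [this]
  ext t
  rw [map_sub, coeff_mul_X_pow', coeff_mul_C]
  rcases Nat.eq_zero_or_pos t with rfl | ht
  · simp only [wgeom, coeff_mk, Nat.dvd_zero, if_pos, Nat.zero_div, pow_zero, coeff_one,
      if_pos rfl]
    rw [if_neg (by omega)]
    ring
  · rw [coeff_one, if_neg ht.ne']
    simp only [wgeom, coeff_mk]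
    by_cases hd : i ∣ t
    · have hit : i ≤ t := Nat.le_of_dvd ht hd
      rw [if_pos hd, if_pos hit, if_pos ((Nat.dvd_sub hd (dvd_refl i)))]
      obtain ⟨c, rfl⟩ := hd
      have hc : 1 ≤ c := by rcases c with _|c <;> omega
      have h1 : (i * c - i) / i = c - 1 := by
        rw [← Nat.mul_sub_one, mul_comm, Nat.mul_div_cancel _ hi]
      rw [h1, Nat.mul_div_cancel_left _ hi]
      rw [← pow_succ]
      rw [Nat.sub_add_cancel hc, sub_self]
    · rw [if_neg hd]
      split_ifs with h1 h2
      · exfalso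
        exact hd (by have := Nat.dvd_add h2 (dvd_refl i); rwa [Nat.sub_add_cancel h1] at this)
      · ring
      · ring

theorem coeff_prod_wgeom (w : ℕ → R) (n : ℕ) (s : Finset ℕ) (hs : ∀ i ∈ s, 0 < i) :
    coeff (R := R) n (∏ i ∈ s, wgeom (w i) i) =
      ∑ p ∈ Finset.univ.filter (fun p : Nat.Partition n => ∀ j ∈ p.parts, j ∈ s),
        ∏ i ∈ s, (w i) ^ (p.parts.count i) := by
  classical
  rw [coeff_prod]
  simp_rw [wgeom, coeff_mk]
  rw [show (∑ l ∈ finsuppAntidiag s n, ∏ i ∈ s, if i ∣ l i then w i ^ (l i / i) else 0)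
      = ∑ l ∈ (finsuppAntidiag s n).filter (fun l => ∀ i ∈ s, i ∣ l i),
          ∏ i ∈ s, w i ^ (l i / i) by
    rw [sum_filter]
    exact sum_congr rfl fun l _ => (prod_ite_zero).trans (by split_ifs <;> simp)]
  symm
  set φ : (p : Nat.Partition n) →
      p ∈ Finset.univ.filter (fun p : Nat.Partition n => ∀ j ∈ p.parts, j ∈ s) → (ℕ →₀ ℕ) :=
    fun p _ => {
      toFun := fun i => p.parts.count i • i
      support := Finset.filter (fun i => i ≠ 0) p.parts.toFinset
      mem_support_toFun := fun a => by
        simp only [smul_eq_mul, ne_eq, mul_eq_zero, Multiset.count_eq_zero]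
        rw [not_or, not_not]
        simp only [Multiset.mem_toFinset, not_not, mem_filter] } with hφ
  apply Finset.sum_bij φ
  · intro p hp
    simp only [mem_filter, mem_univ, true_and] at hp
    simp only [hφ, mem_filter, mem_finsuppAntidiag]
    refine ⟨⟨?_, ?_⟩, fun i _ => by simp only [hφ, Finsupp.coe_mk, smul_eq_mul]; exact Dvd.intro_left _ rfl⟩
    · conv_rhs => rw [← p.parts_sum]
      rw [sum_multiset_count_of_subset _ s]
      · simp only [smul_eq_mul, Finsupp.coe_mk]
      · intro i hi
        exact hp i (Multiset.mem_toFinset.mp hi)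
    · intro i hi
      simp only [mem_filter, Multiset.mem_toFinset, ne_eq] at hi
      exact hp i hi.1
  · intro p₁ hp₁ p₂ hp₂ h
    apply Nat.Partition.ext
    simp only [mem_filter, mem_univ, true_and] at hp₁ hp₂
    ext i
    simp only [hφ, ne_eq, Multiset.mem_toFinset, not_not, smul_eq_mul, Finsupp.mk.injEq] at h
    by_cases hi : i = 0
    · rw [hi, Multiset.count_eq_zero_of_notMem, Multiset.count_eq_zero_of_notMem]
      · intro a; exact Nat.lt_irrefl 0 (hs 0 (hp₂ 0 a))
      · intro a; exact Nat.lt_irrefl 0 (hs 0 (hp₁ 0 a))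
    · rw [← mul_left_inj' hi]
      rw [funext_iff] at h
      exact h.2 i
  · rintro f hf
    simp only [mem_filter, mem_finsuppAntidiag] at hf
    obtain ⟨⟨hsum, hsupp⟩, hdvd⟩ := hf
    refine ⟨⟨∑ i ∈ s, Multiset.replicate (f i / i) i, ?_, ?_⟩, ?_, ?_⟩
    · intro i hi
      simp only [exists_prop, Multiset.mem_sum, mem_map, Function.Embedding.coeFn_mk] at hi
      rcases hi with ⟨t, ht, z⟩
      rw [Multiset.eq_of_mem_replicate z]
      exact hs t ht
    · simp_rw [Multiset.sum_sum, Multiset.sum_replicate, Nat.nsmul_eq_mul]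
      rw [← hsum]
      exact sum_congr rfl fun i hi => Nat.div_mul_cancel (hdvd i hi)
    · simp only [mem_filter, mem_univ, true_and]
      intro j hj
      rw [Multiset.mem_sum] at hj
      rcases hj with ⟨i, hi₁, hi₂⟩
      rwa [Multiset.eq_of_mem_replicate hi₂]
    · simp only [hφ]
      ext i
      simp_rw [Multiset.count_sum', Multiset.count_replicate, sum_ite_eq']
      simp only [ne_eq, smul_eq_mul, Finsupp.coe_mk]
      split_ifs with h
      · exact Nat.div_mul_cancel (hdvd i h)
      · rw [zero_mul]
        symm
        rw [← Finsupp.notMem_support_iff]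
        exact fun hc => h (hsupp hc)
  · intro p hp
    simp only [hφ, smul_eq_mul, Finsupp.coe_mk]
    refine prod_congr rfl fun i hi => ?_
    rw [Nat.mul_div_cancel _ (hs i hi)]

/-- equality of coefficients up to degree N -/
def EqUpTo (N : ℕ) (f g : PowerSeries R) : Prop := ∀ m ≤ N, coeff (R := R) m f = coeff (R := R) m g

theorem EqUpTo.refl {N : ℕ} (f : PowerSeries R) : EqUpTo N f f := fun _ _ => rfl

theorem EqUpTo.symm {N : ℕ} {f g : PowerSeries R} (h : EqUpTo N f g) : EqUpTo N g f :=
  fun m hm => (h m hm).symm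

theorem EqUpTo.trans {N : ℕ} {f g h : PowerSeries R} (h1 : EqUpTo N f g) (h2 : EqUpTo N g h) :
    EqUpTo N f h := fun m hm => (h1 m hm).trans (h2 m hm)

theorem EqUpTo.mul {N : ℕ} {f f' g g' : PowerSeries R} (hf : EqUpTo N f f')
    (hg : EqUpTo N g g') : EqUpTo N (f * g) (f' * g') := by
  intro m hm
  rw [coeff_mul, coeff_mul]
  refine Finset.sum_congr rfl fun x hx => ?_
  rw [HasAntidiagonal.mem_antidiagonal] at hx
  rw [hf x.1 (by omega), hg x.2 (by omega)]

theorem EqUpTo.prod {ι : Type*} {N : ℕ} {s : Finset ι} {f g : ι → PowerSeries R}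
    (h : ∀ i ∈ s, EqUpTo N (f i) (g i)) : EqUpTo N (∏ i ∈ s, f i) (∏ i ∈ s, g i) := by
  classical
  revert h
  induction s using Finset.cons_induction with
  | empty => intro _; exact EqUpTo.refl _
  | cons a s ha ih =>
    intro h
    rw [Finset.prod_cons, Finset.prod_cons]
    exact (h a (Finset.mem_cons_self _ _)).mul (ih fun i hi => h i (Finset.mem_cons_of_mem hi))

theorem EqUpTo.one_of_big {N e : ℕ} (c : R) (he : N < e) :
    EqUpTo N (1 - PowerSeries.C (R := R) c * X ^ e) 1 := by
  intro m hm
  rw [map_sub, coeff_C_mul, coeff_X_pow, if_neg (by omega)]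
  ring

/-- weight: X^2 on multiples of A, 1 otherwise -/
def wA (A i : ℕ) : Polynomial ℤ := if A ∣ i then Polynomial.X ^ 2 else 1

/-- the generating polynomial of partitions of n by number of parts divisible by A -/
def QA (A n : ℕ) : Polynomial ℤ :=
  ∑ p : Nat.Partition n, (Polynomial.X : Polynomial ℤ) ^ (2 * (p.parts.filter (A ∣ ·)).card)

theorem QA_weight (A N n : ℕ) (hn : n ≤ N) (p : Nat.Partition n) :
    ∏ i ∈ Finset.Icc 1 N, (wA A i) ^ (p.parts.count i)
      = (Polynomial.X : Polynomial ℤ) ^ (2 * (p.parts.filter (A ∣ ·)).card) := by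
  classical
  have hparts : ∀ j ∈ p.parts, j ∈ Finset.Icc 1 N := by
    intro j hj
    have h1 : 0 < j := p.parts_pos hj
    have h2 : j ≤ n := by
      have := Multiset.single_le_sum (fun _ _ => Nat.zero_le _) j hj
      rwa [p.parts_sum] at this
    exact Finset.mem_Icc.mpr ⟨h1, by omega⟩
  have key : ∑ i ∈ (Finset.Icc 1 N).filter (A ∣ ·), p.parts.count i
      = (p.parts.filter (A ∣ ·)).card := by
    have h1 : ∀ i ∈ (Finset.Icc 1 N).filter (A ∣ ·),
        p.parts.count i = (p.parts.filter (A ∣ ·)).count i := by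
      intro i hi
      rw [Multiset.count_filter, if_pos (Finset.mem_filter.mp hi).2]
    rw [Finset.sum_congr rfl h1]
    rw [← Finset.sum_subset (s₁ := (p.parts.filter (A ∣ ·)).toFinset)
      (fun i hi => by
        rw [Multiset.mem_toFinset, Multiset.mem_filter] at hi
        exact Finset.mem_filter.mpr ⟨hparts i hi.1, hi.2⟩)
      (fun i _ hi => by
        rw [Multiset.mem_toFinset] at hi
        exact Multiset.count_eq_zero.mpr hi)]
    exact Multiset.toFinset_sum_count_eq _
  calc ∏ i ∈ Finset.Icc 1 N, (wA A i) ^ (p.parts.count i)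
      = ∏ i ∈ (Finset.Icc 1 N).filter (A ∣ ·), ((Polynomial.X : Polynomial ℤ) ^ 2) ^ (p.parts.count i) := by
        rw [Finset.prod_filter]
        refine Finset.prod_congr rfl fun i _ => ?_
        unfold wA
        split_ifs <;> simp
    _ = (Polynomial.X : Polynomial ℤ) ^ (2 * (p.parts.filter (A ∣ ·)).card) := by
        rw [Finset.prod_pow_eq_pow_sum, key, pow_mul]

theorem QA_coeff_even (A k n : ℕ) :
    (QA A n).coeff (2 * k) =
      ((Finset.univ.filter
        (fun π : Nat.Partition n => (π.parts.filter (fun r => A ∣ r)).card = k)).card : ℤ) := by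
  classical
  rw [QA, Polynomial.finset_sum_coeff]
  simp_rw [Polynomial.coeff_X_pow]
  rw [Finset.sum_boole]
  have : Finset.univ.filter
        (fun p : Nat.Partition n => 2 * k = 2 * (p.parts.filter (fun r => A ∣ r)).card)
      = Finset.univ.filter
        (fun π : Nat.Partition n => (π.parts.filter (fun r => A ∣ r)).card = k) :=
    Finset.filter_congr (fun x _ => by constructor <;> omega)
  rw [this]

theorem QA_coeff_odd (A k n : ℕ) : (QA A n).coeff (2 * k + 1) = 0 := by
  classical
  rw [QA, Polynomial.finset_sum_coeff]
  simp_rw [Polynomial.coeff_X_pow]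
  rw [Finset.sum_eq_zero]
  intro p _
  rw [if_neg (by omega)]

theorem prodA_equpto (A : ℕ) (hA : 0 < A) (N : ℕ) (c : Polynomial ℤ) :
    EqUpTo N (∏ i ∈ Finset.Icc 1 N, (1 - PowerSeries.C (R := Polynomial ℤ) c * X ^ (A * i)))
      (∏ j ∈ (Finset.Icc 1 N).filter (A ∣ ·),
        (1 - PowerSeries.C (R := Polynomial ℤ) c * X ^ j)) := by
  classical
  rw [← Finset.prod_filter_mul_prod_filter_not (Finset.Icc 1 N) (fun i => A * i ≤ N)
    (fun i => 1 - PowerSeries.C (R := Polynomial ℤ) c * X ^ (A * i))]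
  have h2 : EqUpTo N
      (∏ i ∈ (Finset.Icc 1 N).filter (fun i => ¬ A * i ≤ N),
        (1 - PowerSeries.C (R := Polynomial ℤ) c * X ^ (A * i))) 1 := by
    have := EqUpTo.prod (N := N)
      (s := (Finset.Icc 1 N).filter (fun i => ¬ A * i ≤ N))
      (f := fun i => 1 - PowerSeries.C (R := Polynomial ℤ) c * X ^ (A * i))
      (g := fun _ => (1 : PowerSeries (Polynomial ℤ)))
      (fun i hi => EqUpTo.one_of_big c (by
        have := (Finset.mem_filter.mp hi).2; omega))
    rwa [Finset.prod_const_one] at this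
  have h1 : (∏ i ∈ (Finset.Icc 1 N).filter (fun i => A * i ≤ N),
        (1 - PowerSeries.C (R := Polynomial ℤ) c * X ^ (A * i)))
      = ∏ j ∈ (Finset.Icc 1 N).filter (A ∣ ·),
        (1 - PowerSeries.C (R := Polynomial ℤ) c * X ^ j) := by
    have himg : ((Finset.Icc 1 N).filter (fun i => A * i ≤ N)).image (A * ·)
        = (Finset.Icc 1 N).filter (A ∣ ·) := by
      ext j
      simp only [Finset.mem_image, Finset.mem_filter, Finset.mem_Icc]
      constructor
      · rintro ⟨i, ⟨⟨hi1, hi2⟩, hi3⟩, rfl⟩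
        exact ⟨⟨Nat.mul_pos hA hi1, hi3⟩, dvd_mul_right A i⟩
      · rintro ⟨⟨hj1, hj2⟩, i, rfl⟩
        have hi0 : 0 < i := Nat.pos_of_ne_zero (by rintro rfl; omega)
        exact ⟨i, ⟨⟨hi0, le_trans (Nat.le_mul_of_pos_left i hA) hj2⟩, hj2⟩, rfl⟩
    rw [← himg]
    rw [Finset.prod_image (fun x _ y _ h => Nat.eq_of_mul_eq_mul_left hA h)]
  rw [h1]
  have : EqUpTo N ((∏ j ∈ (Finset.Icc 1 N).filter (A ∣ ·),
        (1 - PowerSeries.C (R := Polynomial ℤ) c * X ^ j)) *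
      (∏ i ∈ (Finset.Icc 1 N).filter (fun i => ¬ A * i ≤ N),
        (1 - PowerSeries.C (R := Polynomial ℤ) c * X ^ (A * i))))
      ((∏ j ∈ (Finset.Icc 1 N).filter (A ∣ ·),
        (1 - PowerSeries.C (R := Polynomial ℤ) c * X ^ j)) * 1) := (EqUpTo.refl _).mul h2
  intro m hm
  rw [this m hm, mul_one]

theorem swap_prods (A N : ℕ) :
    (∏ i ∈ Finset.Icc 1 N, (1 - (X : PowerSeries (Polynomial ℤ)) ^ i)) *
      (∏ j ∈ (Finset.Icc 1 N).filter (A ∣ ·),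
        (1 - PowerSeries.C (R := Polynomial ℤ) (Polynomial.X ^ 2) * X ^ j))
    = (∏ i ∈ Finset.Icc 1 N, (1 - PowerSeries.C (R := Polynomial ℤ) (wA A i) * X ^ i)) *
      (∏ j ∈ (Finset.Icc 1 N).filter (A ∣ ·), (1 - (X : PowerSeries (Polynomial ℤ)) ^ j)) := by
  classical
  rw [← Finset.prod_filter_mul_prod_filter_not (Finset.Icc 1 N) (A ∣ ·)
    (fun i => 1 - (X : PowerSeries (Polynomial ℤ)) ^ i)]
  rw [← Finset.prod_filter_mul_prod_filter_not (Finset.Icc 1 N) (A ∣ ·)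
    (fun i => 1 - PowerSeries.C (R := Polynomial ℤ) (wA A i) * X ^ i)]
  have e1 : (∏ i ∈ (Finset.Icc 1 N).filter (A ∣ ·),
        (1 - PowerSeries.C (R := Polynomial ℤ) (wA A i) * X ^ i))
      = ∏ i ∈ (Finset.Icc 1 N).filter (A ∣ ·),
        (1 - PowerSeries.C (R := Polynomial ℤ) (Polynomial.X ^ 2) * X ^ i) :=
    Finset.prod_congr rfl fun i hi => by
      unfold wA; rw [if_pos (Finset.mem_filter.mp hi).2]
  have e2 : (∏ i ∈ (Finset.Icc 1 N).filter (fun i => ¬ A ∣ i),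
        (1 - PowerSeries.C (R := Polynomial ℤ) (wA A i) * X ^ i))
      = ∏ i ∈ (Finset.Icc 1 N).filter (fun i => ¬ A ∣ i),
        (1 - (X : PowerSeries (Polynomial ℤ)) ^ i) :=
    Finset.prod_congr rfl fun i hi => by
      unfold wA; rw [if_neg (Finset.mem_filter.mp hi).2, map_one, one_mul]
  rw [e1, e2]
  ring

theorem keylemma (A : ℕ) (hA : 0 < A) (N : ℕ) :
    (PowerSeries.coeff (R := Polynomial ℤ) N)
      ((∑ n ∈ Finset.range (N + 1),
          PowerSeries.C (R := Polynomial ℤ) (QA A n) * PowerSeries.X ^ n) *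
        (∏ i ∈ Finset.Icc 1 N, (1 - PowerSeries.X ^ i)) *
        (∏ i ∈ Finset.Icc 1 N,
          (1 - PowerSeries.C (R := Polynomial ℤ) (Polynomial.X ^ 2) *
            PowerSeries.X ^ (A * i)))) =
    (PowerSeries.coeff (R := Polynomial ℤ) N)
      (∏ i ∈ Finset.Icc 1 N, (1 - PowerSeries.X ^ (A * i))) := by
  classical
  set S := ∑ n ∈ Finset.range (N + 1),
    PowerSeries.C (R := Polynomial ℤ) (QA A n) * PowerSeries.X ^ n with hS
  set G := ∏ i ∈ Finset.Icc 1 N, (1 - (PowerSeries.X : PowerSeries (Polynomial ℤ)) ^ i) with hG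
  set W := ∏ i ∈ Finset.Icc 1 N, wgeom (wA A i) i with hW
  set Cw := ∏ i ∈ Finset.Icc 1 N,
    (1 - PowerSeries.C (R := Polynomial ℤ) (wA A i) * X ^ i) with hCw
  set Dp := ∏ j ∈ (Finset.Icc 1 N).filter (A ∣ ·),
    (1 - (X : PowerSeries (Polynomial ℤ)) ^ j) with hDp
  set Dt := ∏ j ∈ (Finset.Icc 1 N).filter (A ∣ ·),
    (1 - PowerSeries.C (R := Polynomial ℤ) (Polynomial.X ^ 2) * X ^ j) with hDt
  have h56 : EqUpTo N S W := by
    intro m hm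
    have hc : (PowerSeries.coeff (R := Polynomial ℤ) m) S = QA A m := by
      rw [hS, map_sum]
      simp_rw [coeff_C_mul, coeff_X_pow, mul_ite, mul_one, mul_zero]
      rw [Finset.sum_ite_eq (Finset.range (N + 1)) m (fun n => QA A n),
        if_pos (Finset.mem_range.mpr (by omega))]
    rw [hc, hW, coeff_prod_wgeom (fun i => wA A i) m _
      (fun i hi => (Finset.mem_Icc.mp hi).1)]
    have hfu : (Finset.univ.filter
        (fun p : Nat.Partition m => ∀ j ∈ p.parts, j ∈ Finset.Icc 1 N)) = Finset.univ := by
      apply Finset.filter_true_of_mem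
      intro p _ j hj
      have h1 : 0 < j := p.parts_pos hj
      have h2 : j ≤ m := by
        have := Multiset.single_le_sum (fun _ _ => Nat.zero_le _) j hj
        rwa [p.parts_sum] at this
      exact Finset.mem_Icc.mpr ⟨h1, by omega⟩
    rw [hfu, QA]
    exact Finset.sum_congr rfl fun p _ => (QA_weight A N m hm p).symm
  have h1 : EqUpTo N (∏ i ∈ Finset.Icc 1 N,
      (1 - PowerSeries.C (R := Polynomial ℤ) (Polynomial.X ^ 2) * X ^ (A * i))) Dt :=
    prodA_equpto A hA N (Polynomial.X ^ 2)
  have h2 : EqUpTo N (∏ i ∈ Finset.Icc 1 N,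
      (1 - (X : PowerSeries (Polynomial ℤ)) ^ (A * i))) Dp := by
    have := prodA_equpto A hA N 1
    simpa only [map_one, one_mul] using this
  have h4 : Cw * W = 1 := by
    rw [hCw, hW, ← Finset.prod_mul_distrib]
    rw [Finset.prod_congr rfl
      (fun i hi => wgeom_mul (wA A i) i (Finset.mem_Icc.mp hi).1)]
    exact Finset.prod_const_one
  have s1 : EqUpTo N (S * G * (∏ i ∈ Finset.Icc 1 N,
      (1 - PowerSeries.C (R := Polynomial ℤ) (Polynomial.X ^ 2) * X ^ (A * i)))) (S * G * Dt) :=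
    (EqUpTo.refl _).mul h1
  have s2 : S * G * Dt = S * (Cw * Dp) := by
    rw [mul_assoc, hG, hDt, hDp, hCw, swap_prods A N]
  have s3 : EqUpTo N (S * (Cw * Dp)) (W * (Cw * Dp)) := h56.mul (EqUpTo.refl _)
  have s4 : W * (Cw * Dp) = Dp := by
    rw [← mul_assoc, mul_comm W Cw, h4, one_mul]
  have main : EqUpTo N (S * G * (∏ i ∈ Finset.Icc 1 N,
      (1 - PowerSeries.C (R := Polynomial ℤ) (Polynomial.X ^ 2) * X ^ (A * i)))) Dp := by
    refine s1.trans ?_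
    rw [s2]
    refine s3.trans ?_
    rw [s4]
    exact EqUpTo.refl _
  rw [main N le_rfl]
  exact (h2 N le_rfl).symm

theorem constCoeff_GH (A N : ℕ) (hA : 0 < A) :
    constantCoeff (R := Polynomial ℤ)
      ((∏ i ∈ Finset.Icc 1 N, (1 - (PowerSeries.X : PowerSeries (Polynomial ℤ)) ^ i)) *
       (∏ i ∈ Finset.Icc 1 N,
         (1 - PowerSeries.C (R := Polynomial ℤ) (Polynomial.X ^ 2) * PowerSeries.X ^ (A * i)))) = 1 := by
  rw [map_mul, map_prod, map_prod]
  have e1 : ∀ i ∈ Finset.Icc 1 N,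
      constantCoeff (R := Polynomial ℤ) (1 - (PowerSeries.X : PowerSeries (Polynomial ℤ)) ^ i) = 1 := by
    intro i hi
    have h0 : i ≠ 0 := by have := (Finset.mem_Icc.mp hi).1; omega
    rw [map_sub, map_one, map_pow, constantCoeff_X, zero_pow h0, sub_zero]
  have e2 : ∀ i ∈ Finset.Icc 1 N,
      constantCoeff (R := Polynomial ℤ)
        (1 - PowerSeries.C (R := Polynomial ℤ) (Polynomial.X ^ 2) * PowerSeries.X ^ (A * i)) = 1 := by
    intro i hi
    have h0 : A * i ≠ 0 := by
      have := (Finset.mem_Icc.mp hi).1; positivity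
    rw [map_sub, map_one, map_mul, constantCoeff_C, map_pow, constantCoeff_X, zero_pow h0, mul_zero, sub_zero]
  rw [Finset.prod_congr rfl e1, Finset.prod_congr rfl e2,
    Finset.prod_const_one, mul_one]

theorem uniq (A : ℕ) (hA : 0 < A) (P : ℕ → Polynomial ℤ)
    (hP : ∀ N : ℕ,
      (PowerSeries.coeff (R := Polynomial ℤ) N)
        ((∑ n ∈ Finset.range (N + 1),
            PowerSeries.C (R := Polynomial ℤ) (P n) * PowerSeries.X ^ n) *
          (∏ i ∈ Finset.Icc 1 N, (1 - PowerSeries.X ^ i)) *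
          (∏ i ∈ Finset.Icc 1 N,
            (1 - PowerSeries.C (R := Polynomial ℤ) (Polynomial.X ^ 2) *
              PowerSeries.X ^ (A * i)))) =
      (PowerSeries.coeff (R := Polynomial ℤ) N)
        (∏ i ∈ Finset.Icc 1 N, (1 - PowerSeries.X ^ (A * i)))) :
    ∀ n, P n = QA A n := by
  intro n
  induction n using Nat.strong_induction_on with
  | _ n ih =>
  have h1 := hP n
  rw [← keylemma A hA n] at h1
  have hsplit : (∑ j ∈ Finset.range (n + 1),
        PowerSeries.C (R := Polynomial ℤ) (P j) * PowerSeries.X ^ j)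
      = (∑ j ∈ Finset.range (n + 1),
          PowerSeries.C (R := Polynomial ℤ) (QA A j) * PowerSeries.X ^ j) +
        PowerSeries.C (R := Polynomial ℤ) (P n - QA A n) * PowerSeries.X ^ n := by
    rw [Finset.sum_range_succ, Finset.sum_range_succ,
      Finset.sum_congr rfl (fun j hj => by rw [ih j (Finset.mem_range.mp hj)]),
      map_sub]
    ring
  rw [hsplit, add_mul, add_mul, map_add] at h1
  have h2 : (PowerSeries.coeff (R := Polynomial ℤ) n)
      (PowerSeries.C (R := Polynomial ℤ) (P n - QA A n) * PowerSeries.X ^ n *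
        (∏ i ∈ Finset.Icc 1 n, (1 - PowerSeries.X ^ i)) *
        (∏ i ∈ Finset.Icc 1 n,
          (1 - PowerSeries.C (R := Polynomial ℤ) (Polynomial.X ^ 2) *
            PowerSeries.X ^ (A * i)))) = 0 := by
    linear_combination h1
  rw [show PowerSeries.C (R := Polynomial ℤ) (P n - QA A n) * PowerSeries.X ^ n *
        (∏ i ∈ Finset.Icc 1 n, (1 - PowerSeries.X ^ i)) *
        (∏ i ∈ Finset.Icc 1 n,
          (1 - PowerSeries.C (R := Polynomial ℤ) (Polynomial.X ^ 2) *
            PowerSeries.X ^ (A * i)))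
      = PowerSeries.C (R := Polynomial ℤ) (P n - QA A n) *
        (PowerSeries.X ^ n *
          ((∏ i ∈ Finset.Icc 1 n, (1 - PowerSeries.X ^ i)) *
           (∏ i ∈ Finset.Icc 1 n,
             (1 - PowerSeries.C (R := Polynomial ℤ) (Polynomial.X ^ 2) *
               PowerSeries.X ^ (A * i))))) by ring] at h2
  rw [coeff_C_mul, coeff_X_pow_mul' _ n n, if_pos le_rfl, Nat.sub_self,
    coeff_zero_eq_constantCoeff_apply, constCoeff_GH A n hA, mul_one] at h2
  exact sub_eq_zero.mp h2

end BFaux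

theorem stmt10 (α β : ℕ) (hα : 0 < α) (hβ : 0 < β) (hcop : Nat.Coprime α β)
    (P : ℕ → Polynomial ℤ)
    (hP : ∀ N : ℕ,
      (PowerSeries.coeff (R := Polynomial ℤ) N)
        ((∑ n ∈ Finset.range (N + 1),
            PowerSeries.C (R := Polynomial ℤ) (P n) * PowerSeries.X ^ n) *
          (∏ i ∈ Finset.Icc 1 N, (1 - PowerSeries.X ^ i)) *
          (∏ i ∈ Finset.Icc 1 N,
            (1 - PowerSeries.C (R := Polynomial ℤ) (Polynomial.X ^ 2) *
              PowerSeries.X ^ ((α + β) * i)))) =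
      (PowerSeries.coeff (R := Polynomial ℤ) N)
        (∏ i ∈ Finset.Icc 1 N, (1 - PowerSeries.X ^ ((α + β) * i)))) :
    ∀ n k : ℕ, (P n).coeff (2 * k) = (pexact (α + β) k n : ℤ) ∧
      (P n).coeff (2 * k + 1) = 0 := by
  have hA : 0 < α + β := by omega
  have huniq := BFaux.uniq (α + β) hA P hP
  intro n k
  rw [huniq n]
  unfold pexact
  exact ⟨BFaux.QA_coeff_even (α + β) k n, BFaux.QA_coeff_odd (α + β) k n⟩
end
end
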